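/- Let X be a nonzero positive semidefinite 2 × 2 complex matrix and set ξ = Ent(X²)/τ(X²). Then α(ξ)·Ent(X²) = ⟨X, L X⟩, i.e., the improved logarithmic-Sobolev inequality holds with equality for n = 1. -/

import Mathlib

noncomputable section

open scoped Matrix ComplexOrder

/-- The algebra of operators on `(ℂ²)^{⊗ n}`, as `2^n × 2^n` matrices indexed by `Fin n → Fin 2`. -/
abbrev Mq (n : ℕ) := Matrix (Fin n → Fin 2) (Fin n → Fin 2) ℂ

/-- Normalized trace `τ(X) = 2^{-n} tr X`. -/
def qTau {n : ℕ} (X : Mq n) : ℂ := ((2 : ℂ) ^ n)⁻¹ * X.trace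

/-- Real part of the normalized trace. -/
def qTauR {n : ℕ} (X : Mq n) : ℝ := (qTau X).re

/-- Normalized Hilbert–Schmidt inner product `⟨X, Y⟩ = τ(X† Y)`. -/
def qInner {n : ℕ} (X Y : Mq n) : ℂ := qTau (Xᴴ * Y)

/-- `|X| = √(X† X)`. -/
def mAbs {n : ℕ} (X : Mq n) : Mq n := (Matrix.posSemidef_conjTranspose_mul_self X).1.eigenvectorUnitary.1 *
    Matrix.diagonal ((fun x : ℝ => (x : ℂ)) ∘ Real.sqrt ∘ (Matrix.posSemidef_conjTranspose_mul_self X).1.eigenvalues) *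
    (star (Matrix.posSemidef_conjTranspose_mul_self X).1.eigenvectorUnitary : Matrix _ _ ℂ)

/-- The entropy `Ent(X) = τ(X ln X) − τ(X) ln τ(X)` (with the convention `0 ln 0 = 0`),
for positive semidefinite `X`, via the continuous functional calculus. -/
def mEnt {n : ℕ} (X : Mq n) : ℝ :=
  qTauR (cfc (fun x : ℝ => x * Real.log x) X) - qTauR X * Real.log (qTauR X)

/-- Real powers `X^p` of a positive semidefinite matrix, by functional calculus on the
support (`0 ^ p = 0` for `p ≠ 0`). -/
def mPow {n : ℕ} (X : Mq n) (p : ℝ) : Mq n := cfc (fun x : ℝ => x ^ p) X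

/-- Normalized Schatten `p`-norm `‖X‖_p = (τ(|X|^p))^{1/p}`. -/
def schatten {n : ℕ} (p : ℝ) (X : Mq n) : ℝ := qTauR (mPow (mAbs X) p) ^ (1 / p)

/-- Conditional expectation onto the `i`-th qubit being maximally mixed:
`E_i = I^{⊗(i-1)} ⊗ (τ(·) I) ⊗ I^{⊗(n-i)}`. -/
def condExpQ {n : ℕ} (i : Fin n) (X : Mq n) : Mq n :=
  Matrix.of fun a b =>
    if a i = b i then
      (2 : ℂ)⁻¹ * ∑ c : Fin 2, X (Function.update a i c) (Function.update b i c)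
    else 0

/-- The Lindblad generator `K_n = Σ_i L̂_i`, where `L̂_i` acts as `L(X) = X − τ(X) I`
on the `i`-th tensor factor. -/
def Kq (n : ℕ) (X : Mq n) : Mq n := ∑ i : Fin n, (X - condExpQ i X)

/-- The depolarizing channel on the `i`-th qubit:
`e^{-t} X + (1 - e^{-t}) τ_i(X) ⊗ I_i`. -/
def depolStep {n : ℕ} (t : ℝ) (i : Fin n) (X : Mq n) : Mq n :=
  (Real.exp (-t) : ℂ) • X + ((1 : ℂ) - (Real.exp (-t) : ℂ)) • condExpQ i X

/-- `Ψ_t^{⊗ n}`: the `n`-fold tensor power of the qubit depolarizing channel, i.e. the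
composition over all qubits `i` of the depolarizing channel acting on the `i`-th factor. -/
def psiDep {n : ℕ} (t : ℝ) (X : Mq n) : Mq n :=
  (List.finRange n).foldr (fun i Y => depolStep t i Y) X

/-- The binary entropy function `h(s) = −s ln s − (1−s) ln(1−s)`. -/
def binEnt (s : ℝ) : ℝ := -(s * Real.log s) - (1 - s) * Real.log (1 - s)

/-- `h⁻¹ : [0, ln 2] → [0, 1/2]`, the inverse of the restriction of the binary entropy
function to `[0, 1/2]`. -/
def binEntInv (y : ℝ) : ℝ := Function.invFunOn binEnt (Set.Icc 0 (1 / 2)) y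

/-- `φ(ξ) = 1/2 − √(h⁻¹(ln 2 − ξ)(1 − h⁻¹(ln 2 − ξ)))`. -/
def phiF (ξ : ℝ) : ℝ :=
  1 / 2 - Real.sqrt (binEntInv (Real.log 2 - ξ) * (1 - binEntInv (Real.log 2 - ξ)))

/-- `α(ξ) = φ(ξ)/ξ` for `ξ ∈ (0, ln 2]`, with `α(0) = 1/2` by continuous extension. -/
def alphaF (ξ : ℝ) : ℝ := if ξ = 0 then 1 / 2 else ξ⁻¹ * phiF ξ


/-! Generic versions over an arbitrary finite index type, with normalized trace. -/

/-- Normalized trace `τ(X) = d⁻¹ tr X` on `d × d` matrices. -/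
def gTau {d : Type*} [Fintype d] (X : Matrix d d ℂ) : ℂ := (Fintype.card d : ℂ)⁻¹ * X.trace

/-- Real part of the normalized trace. -/
def gTauR {d : Type*} [Fintype d] (X : Matrix d d ℂ) : ℝ := (gTau X).re

/-- Normalized Hilbert–Schmidt inner product. -/
def gInner {d : Type*} [Fintype d] (X Y : Matrix d d ℂ) : ℂ := gTau (Xᴴ * Y)

/-- `|X| = √(X† X)`. -/
def gAbs {d : Type*} [Fintype d] [DecidableEq d] (X : Matrix d d ℂ) : Matrix d d ℂ :=
  (Matrix.posSemidef_conjTranspose_mul_self X).1.eigenvectorUnitary.1 *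
    Matrix.diagonal ((fun x : ℝ => (x : ℂ)) ∘ Real.sqrt ∘ (Matrix.posSemidef_conjTranspose_mul_self X).1.eigenvalues) *
    (star (Matrix.posSemidef_conjTranspose_mul_self X).1.eigenvectorUnitary : Matrix _ _ ℂ)

/-- Entropy `Ent(X) = τ(X ln X) − τ(X) ln τ(X)` (convention `0 ln 0 = 0`). -/
def gEnt {d : Type*} [Fintype d] [DecidableEq d] (X : Matrix d d ℂ) : ℝ :=
  gTauR (cfc (fun x : ℝ => x * Real.log x) X) - gTauR X * Real.log (gTauR X)

/-- Normalized Schatten 2-norm `‖X‖₂ = √(τ(X† X))`. -/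
def gNorm2 {d : Type*} [Fintype d] (X : Matrix d d ℂ) : ℝ := Real.sqrt (gTauR (Xᴴ * X))
/-- The single-qubit Lindblad generator `L(X) = X − τ(X) I` on `2 × 2` matrices. -/
def Lgen (X : Matrix (Fin 2) (Fin 2) ℂ) : Matrix (Fin 2) (Fin 2) ℂ := X - gTau X • 1

-- auxiliary lemmas
lemma binEnt_eq (s : ℝ) : binEnt s = Real.binEntropy s := by
  simp [binEnt, Real.binEntropy, Real.log_inv]; ring

lemma binEntInv_binEnt {s : ℝ} (h0 : 0 ≤ s) (h1 : s ≤ 1 / 2) :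
    binEntInv (binEnt s) = s := by
  have hmem : s ∈ Set.Icc (0:ℝ) (1/2) := ⟨h0, h1⟩
  have hinj : Set.InjOn binEnt (Set.Icc 0 (1/2)) := by
    have h2 : (1:ℝ)/2 = 2⁻¹ := by norm_num
    intro x hx y hy hxy
    rw [h2] at hx hy
    exact Real.binEntropy_strictMonoOn.injOn hx hy (by simpa [binEnt_eq] using hxy)
  exact hinj (Function.invFunOn_apply_mem (f := binEnt) hmem) hmem
    (Function.invFunOn_apply_eq (f := binEnt) hmem)

lemma trace_cfc_fin2 (A : Matrix (Fin 2) (Fin 2) ℂ) (hA : A.IsHermitian) (f : ℝ → ℝ) :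
    (cfc f A).trace = ((f (hA.eigenvalues 0) + f (hA.eigenvalues 1) : ℝ) : ℂ) := by
  rw [hA.cfc_eq f, Matrix.IsHermitian.cfc, Unitary.conjStarAlgAut_apply, Matrix.trace_mul_cycle]
  rw [Unitary.coe_star_mul_self, Matrix.one_mul, Matrix.trace_diagonal]
  simp [Fin.sum_univ_two]

lemma gTauR_cfc (A : Matrix (Fin 2) (Fin 2) ℂ) (hA : A.IsHermitian) (f : ℝ → ℝ) :
    gTauR (cfc f A) = (f (hA.eigenvalues 0) + f (hA.eigenvalues 1)) / 2 := by
  rw [gTauR, gTau, trace_cfc_fin2 A hA f]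
  have : ((Fintype.card (Fin 2) : ℂ))⁻¹ *
      ((f (hA.eigenvalues 0) + f (hA.eigenvalues 1) : ℝ) : ℂ)
      = (((f (hA.eigenvalues 0) + f (hA.eigenvalues 1)) / 2 : ℝ) : ℂ) := by
    simp only [Fintype.card_fin]; push_cast; ring
  rw [this, Complex.ofReal_re]

-- real-variable key lemma, asymmetric version
lemma real_key_aux {a b : ℝ} (ha : 0 ≤ a) (hab : a ≤ b) (hb : 0 < b) :
    alphaF (((a^2 * Real.log (a^2) + b^2 * Real.log (b^2)) / 2
        - (a^2 + b^2) / 2 * Real.log ((a^2 + b^2) / 2)) / ((a^2 + b^2) / 2))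
      * ((a^2 * Real.log (a^2) + b^2 * Real.log (b^2)) / 2
        - (a^2 + b^2) / 2 * Real.log ((a^2 + b^2) / 2))
    = (a^2 + b^2) / 2 - ((a + b) / 2)^2 := by
  set S : ℝ := a^2 + b^2 with hSdef
  have hS : 0 < S := by positivity
  set p : ℝ := a^2 / S with hpdef
  have hp0 : 0 ≤ p := by positivity
  have hp2 : p ≤ 1/2 := by
    rw [hpdef, div_le_iff₀ hS]
    nlinarith [pow_le_pow_left₀ ha hab 2]
  have h1p : 1 - p = b^2 / S := by
    rw [hpdef]; rw [eq_div_iff hS.ne', sub_mul, div_mul_cancel₀ _ hS.ne', one_mul, hSdef]; ring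
  have hplog : p * Real.log p = (a^2/S) * (Real.log (a^2) - Real.log S) := by
    rcases eq_or_ne a 0 with h | h
    · simp [hpdef, h]
    · rw [hpdef, Real.log_div (pow_ne_zero 2 h) hS.ne']
  have hqlog : (1 - p) * Real.log (1 - p) = (b^2/S) * (Real.log (b^2) - Real.log S) := by
    rw [h1p, Real.log_div (pow_ne_zero 2 hb.ne') hS.ne']
  have hlogT : Real.log (S / 2) = Real.log S - Real.log 2 :=
    Real.log_div hS.ne' two_ne_zero
  have hE : (a^2 * Real.log (a^2) + b^2 * Real.log (b^2)) / 2
      - S / 2 * Real.log (S / 2) = S / 2 * (Real.log 2 - binEnt p) := by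
    rw [binEnt, hplog, hqlog, hlogT]
    field_simp
    ring
  rw [hE]
  rcases eq_or_lt_of_le hab with heq | hlt
  · subst heq
    have hp : p = 1/2 := by
      rw [hpdef, div_eq_div_iff hS.ne' two_ne_zero]; rw [hSdef]; ring
    have hz : Real.log 2 - binEnt p = 0 := by
      rw [hp, binEnt_eq, show (1:ℝ)/2 = 2⁻¹ by norm_num, Real.binEntropy_two_inv]; ring
    rw [hz]
    simp [alphaF]
    rw [hSdef]; ring
  · have hplt : p < 1/2 := by
      rw [hpdef, div_lt_iff₀ hS]
      nlinarith [pow_lt_pow_left₀ hlt ha (by norm_num : 2 ≠ 0)]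
    have hlt2 : binEnt p < Real.log 2 := by
      rw [binEnt_eq]
      refine Real.binEntropy_lt_log_two.mpr fun hc => ?_
      rw [hc] at hplt; norm_num at hplt
    have hxpos : 0 < Real.log 2 - binEnt p := by linarith
    set c : ℝ := Real.log 2 - binEnt p with hcdef
    have hT : (0:ℝ) < S / 2 := by positivity
    have hdiv : S / 2 * c / (S / 2) = c := by field_simp
    rw [hdiv, alphaF, if_neg hxpos.ne']
    have harg : Real.log 2 - c = binEnt p := by rw [hcdef]; ring
    have hinv : binEntInv (Real.log 2 - c) = p := by rw [harg, binEntInv_binEnt hp0 hp2]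
    have hsqrt : Real.sqrt (p * (1 - p)) = a * b / S := by
      rw [h1p, hpdef]
      have : a^2 / S * (b^2 / S) = (a * b / S)^2 := by ring
      rw [this, Real.sqrt_sq (by positivity)]
    rw [phiF, hinv, hsqrt]
    field_simp
    ring

lemma real_key {a b : ℝ} (ha : 0 ≤ a) (hb : 0 ≤ b) (hab : 0 < a^2 + b^2) :
    alphaF (((a^2 * Real.log (a^2) + b^2 * Real.log (b^2)) / 2
        - (a^2 + b^2) / 2 * Real.log ((a^2 + b^2) / 2)) / ((a^2 + b^2) / 2))
      * ((a^2 * Real.log (a^2) + b^2 * Real.log (b^2)) / 2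
        - (a^2 + b^2) / 2 * Real.log ((a^2 + b^2) / 2))
    = (a^2 + b^2) / 2 - ((a + b) / 2)^2 := by
  rcases le_total a b with h | h
  · have hbpos : 0 < b := by
      rcases eq_or_lt_of_le hb with h0 | h0
      · exfalso; nlinarith
      · exact h0
    exact real_key_aux ha h hbpos
  · have hapos : 0 < a := by
      rcases eq_or_lt_of_le ha with h0 | h0
      · exfalso; nlinarith
      · exact h0
    have := real_key_aux hb h hapos
    rw [add_comm (b^2) (a^2), add_comm b a,
      add_comm (b^2 * Real.log (b^2)) (a^2 * Real.log (a^2))] at this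
    exact this

/-- For `n = 1` the improved log-Sobolev inequality holds with equality:
`α(ξ) Ent(X²) = ⟨X, L X⟩` with `ξ = Ent(X²)/τ(X²)`. -/
theorem log_sobolev_equality_one_qubit (X : Matrix (Fin 2) (Fin 2) ℂ)
    (hX : X.PosSemidef) (hX0 : X ≠ 0) :
    alphaF (gEnt (X * X) / gTauR (X * X)) * gEnt (X * X) = (gInner X (Lgen X)).re := by
  have hH : X.IsHermitian := hX.1
  have hsa : IsSelfAdjoint X := hH
  set a := hH.eigenvalues 0 with hadef
  set b := hH.eigenvalues 1 with hbdef
  have ha : 0 ≤ a := hX.eigenvalues_nonneg 0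
  have hb : 0 ≤ b := hX.eigenvalues_nonneg 1
  have hXX : X * X = X ^ 2 := (pow_two X).symm
  have hpow : gTauR (X * X) = (a ^ 2 + b ^ 2) / 2 := by
    rw [hXX, ← cfc_pow_id (R := ℝ) X 2 hsa, gTauR_cfc X hH]
  have hlogpart : gTauR (cfc (fun x : ℝ => x * Real.log x) (X * X))
      = (a ^ 2 * Real.log (a ^ 2) + b ^ 2 * Real.log (b ^ 2)) / 2 := by
    rw [hXX, ← cfc_comp_pow (fun x : ℝ => x * Real.log x) 2 X
        (Real.continuous_mul_log.continuousOn) hsa, gTauR_cfc X hH]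
  have hEnt : gEnt (X * X) = (a ^ 2 * Real.log (a ^ 2) + b ^ 2 * Real.log (b ^ 2)) / 2
      - (a ^ 2 + b ^ 2) / 2 * Real.log ((a ^ 2 + b ^ 2) / 2) := by
    rw [gEnt, hlogpart, hpow]
  have htr : X.trace = ((a + b : ℝ) : ℂ) := by
    conv_lhs => rw [← cfc_id (R := ℝ) X hsa]
    rw [trace_cfc_fin2 X hH]
    simp
    rfl
  have htr2 : (X * X).trace = ((a ^ 2 + b ^ 2 : ℝ) : ℂ) := by
    rw [hXX, ← cfc_pow_id (R := ℝ) X 2 hsa, trace_cfc_fin2 X hH]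
  have hgtau : gTau X = (((a + b) / 2 : ℝ) : ℂ) := by
    rw [gTau, htr]; simp only [Fintype.card_fin]; push_cast; ring
  have hInner : (gInner X (Lgen X)).re = (a ^ 2 + b ^ 2) / 2 - ((a + b) / 2) ^ 2 := by
    have hmul : Xᴴ * (X - gTau X • 1) = X * X - gTau X • X := by
      rw [hH.eq, Matrix.mul_sub, Matrix.mul_smul, Matrix.mul_one]
    rw [gInner, Lgen, hmul, gTau, Matrix.trace_sub, Matrix.trace_smul, htr2, htr, hgtau]
    have : ((Fintype.card (Fin 2) : ℂ))⁻¹ *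
        (((a ^ 2 + b ^ 2 : ℝ) : ℂ) - (((a + b) / 2 : ℝ) : ℂ) • ((a + b : ℝ) : ℂ))
        = (((a ^ 2 + b ^ 2) / 2 - ((a + b) / 2) ^ 2 : ℝ) : ℂ) := by
      simp only [Fintype.card_fin, smul_eq_mul]; push_cast; ring
    rw [this, Complex.ofReal_re]
  have hnz : 0 < a ^ 2 + b ^ 2 := by
    rcases lt_or_eq_of_le (by positivity : (0 : ℝ) ≤ a ^ 2 + b ^ 2) with h | h
    · exact h
    · exfalso
      apply hX0
      have ha0 : a = 0 := by nlinarith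
      have hb0 : b = 0 := by nlinarith
      have hdiag : Matrix.diagonal (RCLike.ofReal ∘ hH.eigenvalues)
          = (0 : Matrix (Fin 2) (Fin 2) ℂ) := by
        have hfun : (RCLike.ofReal ∘ hH.eigenvalues : Fin 2 → ℂ) = 0 := by
          funext i
          have hiz : hH.eigenvalues i = 0 := by
            fin_cases i
            · show hH.eigenvalues 0 = 0
              rw [← hadef]; exact ha0
            · show hH.eigenvalues 1 = 0
              rw [← hbdef]; exact hb0
          simp [Function.comp, hiz]
        rw [hfun]; exact Matrix.diagonal_zero
      conv_lhs => rw [hH.spectral_theorem, hdiag]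
      exact map_zero _
  rw [hEnt, hpow, hInner]
  exact real_key ha hb hnz

end
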